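/- arXiv:1208.4516 — 2 statements merged into one kernel-verified Lean document; each statement's English description precedes it below -/
import Mathlib

section
/- Let c₂ ≥ 2 be a real constant and l ≥ 1 an integer. Let S₁, …, S_f be pairwise disjoint finite sets of reals and for each i let G_i consist of the min(|S_i|, ⌈c₂ l⌉) largest elements of S_i. Then for any set of indices I ⊆ {1,…,f} and any integer k with 1 ≤ k ≤ l: if x is an element whose rank in ⋃_{i∈I} G_i is at least k, then the rank of x in ⋃_{i∈I} S_i is at least k; and the k-th largest element of ⋃_{i∈I} S_i (when it exists) belongs to ⋃_{i∈I} G_i. -/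
/-- Replacing each child set S_i by its top-⌈c₂l⌉ subset G_i preserves rank-k
queries for k ≤ l. -/
theorem stmt_12 (c₂ : ℝ) (hc₂ : 2 ≤ c₂) (f l k : ℕ) (hl : 1 ≤ l)
    (hk1 : 1 ≤ k) (hkl : k ≤ l)
    (S G : Fin f → Finset ℝ)
    (hdisj : ∀ i j : Fin f, i ≠ j → Disjoint (S i) (S j))
    (hGS : ∀ i, G i ⊆ S i)
    (hGcard : ∀ i, (G i).card = min (S i).card ⌈c₂ * l⌉₊)
    (hGtop : ∀ i, ∀ x ∈ S i, x ∉ G i → ∀ y ∈ G i, x < y)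
    (I : Finset (Fin f)) :
    (∀ x : ℝ, k ≤ ((I.biUnion G).filter (fun y => x ≤ y)).card →
        k ≤ ((I.biUnion S).filter (fun y => x ≤ y)).card) ∧
    (∀ x ∈ I.biUnion S,
        ((I.biUnion S).filter (fun y => x ≤ y)).card = k → x ∈ I.biUnion G) := by
  have hsub : I.biUnion G ⊆ I.biUnion S := by
    intro x hx
    rcases Finset.mem_biUnion.1 hx with ⟨i, hi, hxi⟩
    exact Finset.mem_biUnion.2 ⟨i, hi, hGS i hxi⟩
  have hceil : 2 * l ≤ ⌈c₂ * l⌉₊ := by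
    have h1 : (2 * l : ℝ) ≤ c₂ * l := by
      have : (0 : ℝ) ≤ (l : ℝ) := Nat.cast_nonneg l
      nlinarith
    have h2 : (2 * l : ℝ) ≤ (⌈c₂ * l⌉₊ : ℝ) := h1.trans (Nat.le_ceil _)
    exact_mod_cast h2
  constructor
  · intro x hx
    refine hx.trans (Finset.card_le_card ?_)
    exact Finset.filter_subset_filter _ hsub
  · intro x hx hrank
    rcases Finset.mem_biUnion.1 hx with ⟨i, hi, hxi⟩
    by_contra hxG
    have hxGi : x ∉ G i := fun h => hxG (Finset.mem_biUnion.2 ⟨i, hi, h⟩)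
    -- G i is a proper subset of S i
    have hproper : (G i).card < (S i).card :=
      Finset.card_lt_card (Finset.ssubset_iff_of_subset (hGS i) |>.2 ⟨x, hxi, hxGi⟩)
    have hGceil : (G i).card = ⌈c₂ * l⌉₊ := by
      have := hGcard i
      rcases min_cases (S i).card ⌈c₂ * l⌉₊ with ⟨h1, h2⟩ | ⟨h1, h2⟩
      · omega
      · omega
    -- insert x (G i) ⊆ filter
    have hins : insert x (G i) ⊆ (I.biUnion S).filter (fun y => x ≤ y) := by
      intro y hy
      rcases Finset.mem_insert.1 hy with rfl | hy
      · exact Finset.mem_filter.2 ⟨hx, le_refl _⟩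
      · exact Finset.mem_filter.2 ⟨Finset.mem_biUnion.2 ⟨i, hi, hGS i hy⟩,
          (hGtop i x hxi hxGi y hy).le⟩
    have hcard : (G i).card + 1 ≤ ((I.biUnion S).filter (fun y => x ≤ y)).card := by
      have := Finset.card_le_card hins
      rwa [Finset.card_insert_of_notMem hxGi] at this
    omega
end

section
/- Let c ≥ 2 and let L₁, …, L_m be pairwise disjoint finite sets of reals each of size at least c·k for an integer k ≥ 1 with k < m. Let M = {max L₁, …, max L_m}, let v' be the k-th largest element of M, and call L_i active if max L_i ≥ v'. Then there are at least k active sets, and every element of ⋃ L_i that is strictly greater than v' belongs to an active set; consequently the rank of v' in ⋃ L_i is at least k. -/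
/-- Reduction for the case k < m of AURS: take the k-th largest maximum v'; then at
least k sets are active, every element of the union strictly above v' lies in an
active set, and the rank of v' in the union is at least k. -/
theorem stmt_18 (c : ℝ) (hc : 2 ≤ c) (m k : ℕ) (hk : 1 ≤ k) (hkm : k < m)
    (L : Fin m → Finset ℝ)
    (hne : ∀ i, (L i).Nonempty)
    (hdisj : ∀ i j : Fin m, i ≠ j → Disjoint (L i) (L j))
    (hsize : ∀ i, c * k ≤ ((L i).card : ℝ))
    (v' : ℝ)
    (hv'M : v' ∈ Finset.univ.image (fun i => (L i).max' (hne i)))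
    (hv'rank :
      ((Finset.univ.image (fun i => (L i).max' (hne i))).filter
        (fun x => v' ≤ x)).card = k) :
    k ≤ (Finset.univ.filter (fun i : Fin m => v' ≤ (L i).max' (hne i))).card ∧
    (∀ x ∈ Finset.univ.biUnion L, v' < x →
      ∃ i : Fin m, v' ≤ (L i).max' (hne i) ∧ x ∈ L i) ∧
    k ≤ ((Finset.univ.biUnion L).filter (fun x => v' ≤ x)).card := by
  have himg : (Finset.univ.image (fun i => (L i).max' (hne i))).filter
      (fun x => v' ≤ x) =
      (Finset.univ.filter (fun i : Fin m => v' ≤ (L i).max' (hne i))).image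
        (fun i => (L i).max' (hne i)) := by
    ext x
    simp only [Finset.mem_filter, Finset.mem_image, Finset.mem_univ, true_and]
    constructor
    · rintro ⟨⟨i, rfl⟩, hx⟩; exact ⟨i, ⟨hx, rfl⟩⟩
    · rintro ⟨i, hi, rfl⟩; exact ⟨⟨i, rfl⟩, hi⟩
  refine ⟨?_, ?_, ?_⟩
  · rw [himg] at hv'rank
    calc k = _ := hv'rank.symm
      _ ≤ _ := Finset.card_image_le
  · intro x hx hvx
    simp only [Finset.mem_biUnion, Finset.mem_univ, true_and] at hx
    obtain ⟨i, hi⟩ := hx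
    exact ⟨i, le_trans hvx.le (Finset.le_max' _ _ hi), hi⟩
  · rw [← hv'rank]
    apply Finset.card_le_card
    intro x hx
    simp only [Finset.mem_filter, Finset.mem_image, Finset.mem_univ, true_and] at hx ⊢
    obtain ⟨⟨i, rfl⟩, hvx⟩ := hx
    exact ⟨Finset.mem_biUnion.mpr ⟨i, Finset.mem_univ i, (L i).max'_mem (hne i)⟩, hvx⟩
end
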